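/- Let T be a transition kernel with independent transitions, T(s' | s, a) = ∏_{j=1}^{n_s} T_j(s'_j | s, a), and let p be any full-support joint probability mass function on (S, A, S') consistent with T. Then for every current-step coordinate X_i ∈ (S, A) and every next-step coordinate S'_j, the conditional independence X_i ⊥_p S'_j | ((S, A) \ {X_i}) holds if and only if T_j does not depend on current-step coordinate i, i.e. T_j takes equal values at any two current configurations that differ only in coordinate i. -/

import Mathlib

open Finset

noncomputable section

/-- Marginal probability that a configuration agrees with `x` on the coordinates in `E`. -/
def marg {V : Type*} [Fintype V] [DecidableEq V] {val : V → Type*}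
    [∀ v, Fintype (val v)] [∀ v, DecidableEq (val v)]
    (p : (∀ v, val v) → ℝ) (E : Finset V) (x : ∀ v, val v) : ℝ :=
  ∑ y : ∀ v, val v, if ∀ v ∈ E, y v = x v then p y else 0

/-- Conditional probability of the value of coordinate `v` given the values of `P`. -/
def condP {V : Type*} [Fintype V] [DecidableEq V] {val : V → Type*}
    [∀ v, Fintype (val v)] [∀ v, DecidableEq (val v)]
    (p : (∀ v, val v) → ℝ) (v : V) (P : Finset V) (x : ∀ v, val v) : ℝ :=
  marg p (insert v P) x / marg p P x

/-- Conditional independence X ⊥ Y | Z, in cross-multiplied form. -/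
def CondIndep {V : Type*} [Fintype V] [DecidableEq V] {val : V → Type*}
    [∀ v, Fintype (val v)] [∀ v, DecidableEq (val v)]
    (p : (∀ v, val v) → ℝ) (X Y Z : Finset V) : Prop :=
  ∀ x : ∀ v, val v,
    marg p (X ∪ Y ∪ Z) x * marg p Z x = marg p (X ∪ Z) x * marg p (Y ∪ Z) x

/-- Variables of an FMDP: states, actions, next states. -/
abbrev FVar (ns na : ℕ) := Fin ns ⊕ (Fin na ⊕ Fin ns)

/-- Value types of FMDP variables. -/
def fv {ns na : ℕ} (Sv : Fin ns → Type) (Av : Fin na → Type) : FVar ns na → Type :=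
  Sum.elim Sv (Sum.elim Av Sv)

instance {ns na : ℕ} (Sv : Fin ns → Type) (Av : Fin na → Type)
    [∀ i, Fintype (Sv i)] [∀ j, Fintype (Av j)] : ∀ v, Fintype (fv Sv Av v)
  | .inl i => inferInstanceAs (Fintype (Sv i))
  | .inr (.inl j) => inferInstanceAs (Fintype (Av j))
  | .inr (.inr k) => inferInstanceAs (Fintype (Sv k))

instance {ns na : ℕ} (Sv : Fin ns → Type) (Av : Fin na → Type)
    [∀ i, DecidableEq (Sv i)] [∀ j, DecidableEq (Av j)] : ∀ v, DecidableEq (fv Sv Av v)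
  | .inl i => inferInstanceAs (DecidableEq (Sv i))
  | .inr (.inl j) => inferInstanceAs (DecidableEq (Av j))
  | .inr (.inr k) => inferInstanceAs (DecidableEq (Sv k))

/-- The set of current-step coordinates. -/
def curSet (ns na : ℕ) : Finset (FVar ns na) :=
  (Finset.univ.image (Sum.inl : Fin ns → FVar ns na)) ∪
    (Finset.univ.image (fun j : Fin na => (Sum.inr (Sum.inl j) : FVar ns na)))

/-- A joint pmf `p` on (S, A, S') is consistent with the transition kernel `T`. -/
def FConsistent {ns na : ℕ} {Sv : Fin ns → Type} {Av : Fin na → Type}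
    [∀ i, Fintype (Sv i)] [∀ j, Fintype (Av j)]
    [∀ i, DecidableEq (Sv i)] [∀ j, DecidableEq (Av j)]
    (p : (∀ v, fv Sv Av v) → ℝ)
    (T : (∀ i, Sv i) → (∀ j, Av j) → (∀ k, Sv k) → ℝ) : Prop :=
  ∀ x, p x = marg p (curSet ns na) x *
    T (fun i => x (.inl i)) (fun j => x (.inr (.inl j))) (fun k => x (.inr (.inr k)))

/-- Current-step coordinates of an FMDP: state variables and action variables. -/
abbrev CurVar (ns na : ℕ) := Fin ns ⊕ Fin na

/-- Value types of the current-step coordinates. -/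
def cv {ns na : ℕ} (Sv : Fin ns → Type) (Av : Fin na → Type) : CurVar ns na → Type :=
  Sum.elim Sv Av

/-- The coordinates of a current configuration. -/
def curCoord {ns na : ℕ} {Sv : Fin ns → Type} {Av : Fin na → Type}
    (c : (∀ i, Sv i) × (∀ j, Av j)) : ∀ u : CurVar ns na, cv Sv Av u
  | .inl i => c.1 i
  | .inr j => c.2 j

/-- Embedding of current-step coordinates into the full variable set. -/
def liftCur {ns na : ℕ} : CurVar ns na → FVar ns na :=
  Sum.elim Sum.inl (fun j => Sum.inr (Sum.inl j))


section Generic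
variable {ι : Type*} [Fintype ι] [DecidableEq ι] {π : ι → Type*}
  [∀ i, Fintype (π i)] [∀ i, DecidableEq (π i)]

lemma sum_if_const {α : Type*} [Fintype α] (P : Prop) [Decidable P] (f : α → ℝ) :
    ∑ a : α, (if P then f a else 0) = if P then ∑ a, f a else 0 := by
  by_cases h : P <;> simp [h]

lemma ite_inst {α : Sort*} {P : Prop} (i1 i2 : Decidable P) (a b : α) :
    @ite α P i1 a b = @ite α P i2 a b := by
  cases Subsingleton.elim i1 i2
  rfl

lemma sum_fix_off (h : ∀ i, π i) (u : ι) (f : (∀ i, π i) → ℝ) :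
    ∑ g : ∀ i, π i, (if ∀ u', u' ≠ u → g u' = h u' then f g else 0)
      = ∑ τ : π u, f (Function.update h u τ) := by
  have key : ∀ g : ∀ i, π i,
      (∑ τ : π u, if g = Function.update h u τ then f g else 0)
        = if ∀ u', u' ≠ u → g u' = h u' then f g else 0 := by
    intro g
    by_cases hc : ∀ u', u' ≠ u → g u' = h u'
    · have hiff : ∀ τ : π u, (g = Function.update h u τ) ↔ τ = g u := by
        intro τ
        constructor
        · intro hg; rw [hg, Function.update_self]
        · rintro rfl
          funext u'
          by_cases h' : u' = u
          · subst h'; rw [Function.update_self]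
          · rw [Function.update_of_ne h', hc u' h']
      simp only [hiff, Finset.sum_ite_eq', Finset.mem_univ, if_true]
      rw [if_pos hc]
    · rw [if_neg hc]
      apply Finset.sum_eq_zero
      intro τ _
      rw [if_neg]
      intro hg
      exact hc (fun u' hu' => by rw [hg, Function.update_of_ne hu'])
  calc ∑ g : ∀ i, π i, (if ∀ u', u' ≠ u → g u' = h u' then f g else 0)
      = ∑ g : ∀ i, π i, ∑ τ : π u, if g = Function.update h u τ then f g else 0 :=
        Finset.sum_congr rfl fun g _ => (key g).symm
    _ = ∑ τ : π u, ∑ g : ∀ i, π i, if g = Function.update h u τ then f g else 0 :=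
        Finset.sum_comm
    _ = ∑ τ : π u, f (Function.update h u τ) := by
        refine Finset.sum_congr rfl fun τ _ => ?_
        simp [Finset.sum_ite_eq']

lemma sum_pi_ite_prod (f : ∀ i, π i → ℝ) (h1 : ∀ i, ∑ τ, f i τ = 1) (k : ι) (y : π k) :
    ∑ t : ∀ i, π i, (if t k = y then ∏ i, f i (t i) else 0) = f k y := by
  classical
  set e := Equiv.piSplitAt k π with he
  have := (e.symm.sum_comp (fun t : ∀ i, π i => if t k = y then ∏ i, f i (t i) else 0)).symm
  rw [this, Fintype.sum_prod_type]
  have hk : ∀ (τ : π k) (r : ∀ j : {j // j ≠ k}, π j), e.symm (τ, r) k = τ := by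
    intro τ r; simp [he]
  have hne : ∀ (τ : π k) (r : ∀ j : {j // j ≠ k}, π j) (i : ι) (hi : i ≠ k),
      e.symm (τ, r) i = r ⟨i, hi⟩ := by
    intro τ r i hi; simp [he, hi]
  calc ∑ τ : π k, ∑ r, (if e.symm (τ, r) k = y then ∏ i, f i (e.symm (τ, r) i) else 0)
      = ∑ τ : π k, (if τ = y then ∑ r, ∏ i, f i (e.symm (τ, r) i) else 0) := by
        refine Finset.sum_congr rfl fun τ _ => ?_
        simp only [hk]
        exact sum_if_const _ _
    _ = ∑ r, ∏ i, f i (e.symm (y, r) i) := by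
        simp [Finset.sum_ite_eq']
    _ = ∑ r : ∀ j : {j // j ≠ k}, π j, f k y * ∏ j : {j // j ≠ k}, f j (r j) := by
        refine Finset.sum_congr rfl fun r _ => ?_
        rw [Finset.prod_eq_mul_prod_sdiff_singleton_of_mem (Finset.mem_univ k)
          (fun i => f i (e.symm (y, r) i)), hk]
        congr 1
        rw [Finset.prod_subtype (Finset.univ \ {k}) (p := fun j => j ≠ k) (by simp)
          (fun j => f j (e.symm (y, r) j))]
        exact Fintype.prod_congr _ _ fun j => by rw [hne y r j j.2]
    _ = f k y := by
        rw [← Finset.mul_sum, ← Fintype.prod_sum]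
        simp [h1]
end Generic

set_option linter.unusedSectionVars false
section FMDPAux
variable {ns na : ℕ} {Sv : Fin ns → Type} {Av : Fin na → Type}
  [∀ i, Fintype (Sv i)] [∀ i, DecidableEq (Sv i)]
  [∀ j, Fintype (Av j)] [∀ j, DecidableEq (Av j)]

instance : ∀ u, Fintype (cv Sv Av u)
  | .inl i => inferInstanceAs (Fintype (Sv i))
  | .inr j => inferInstanceAs (Fintype (Av j))

instance : ∀ u, DecidableEq (cv Sv Av u)
  | .inl i => inferInstanceAs (DecidableEq (Sv i))
  | .inr j => inferInstanceAs (DecidableEq (Av j))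

/-- Assemble a full configuration from its three parts. -/
def pack (s : ∀ i, Sv i) (a : ∀ j, Av j) (t : ∀ m, Sv m) : ∀ v, fv Sv Av v
  | .inl i => s i
  | .inr (.inl j) => a j
  | .inr (.inr m) => t m

@[simp] lemma pack_inl (s : ∀ i, Sv i) (a : ∀ j, Av j) (t : ∀ m, Sv m) (i : Fin ns) :
    pack s a t (.inl i) = s i := rfl
@[simp] lemma pack_inr_inl (s : ∀ i, Sv i) (a : ∀ j, Av j) (t : ∀ m, Sv m) (j : Fin na) :
    pack s a t (.inr (.inl j)) = a j := rfl
@[simp] lemma pack_inr_inr (s : ∀ i, Sv i) (a : ∀ j, Av j) (t : ∀ m, Sv m) (m : Fin ns) :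
    pack s a t (.inr (.inr m)) = t m := rfl

/-- Equivalence between triples and full configurations. -/
def packEquiv : ((∀ i, Sv i) × (∀ j, Av j) × (∀ m, Sv m)) ≃ (∀ v, fv Sv Av v) where
  toFun c := pack c.1 c.2.1 c.2.2
  invFun x := ⟨fun i => x (.inl i), fun j => x (.inr (.inl j)), fun m => x (.inr (.inr m))⟩
  left_inv c := rfl
  right_inv x := by
    funext v
    cases v with
    | inl i => rfl
    | inr w => cases w <;> rfl

lemma sum_pack (F : (∀ v, fv Sv Av v) → ℝ) :
    ∑ x, F x = ∑ s, ∑ a, ∑ t, F (pack s a t) := by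
  rw [← (packEquiv (Sv := Sv) (Av := Av)).sum_comp F, Fintype.sum_prod_type]
  refine Finset.sum_congr rfl fun s _ => ?_
  rw [Fintype.sum_prod_type]
  rfl

/-- The current part of a full configuration. -/
def xc (x : ∀ v, fv Sv Av v) : (∀ i, Sv i) × (∀ j, Av j) :=
  (fun i => x (.inl i), fun j => x (.inr (.inl j)))

lemma liftCur_injective : Function.Injective (liftCur (ns := ns) (na := na)) := by
  intro u u' h
  cases u <;> cases u' <;> simp [liftCur] at h <;> simp [h]

lemma curSet_eq : curSet ns na = Finset.univ.image liftCur := by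
  ext v
  simp only [curSet, Finset.mem_union, Finset.mem_image, Finset.mem_univ, true_and]
  constructor
  · rintro (⟨i, rfl⟩ | ⟨j, rfl⟩)
    exacts [⟨.inl i, rfl⟩, ⟨.inr j, rfl⟩]
  · rintro ⟨u, rfl⟩
    cases u
    exacts [Or.inl ⟨_, rfl⟩, Or.inr ⟨_, rfl⟩]

lemma agree_cur_iff (s : ∀ i, Sv i) (a : ∀ j, Av j) (t : ∀ m, Sv m) (x : ∀ v, fv Sv Av v) :
    (∀ v ∈ curSet ns na, pack s a t v = x v) ↔ s = (xc x).1 ∧ a = (xc x).2 := by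
  rw [curSet_eq, Finset.forall_mem_image]
  constructor
  · intro h
    exact ⟨funext fun i => @h (Sum.inl i) (Finset.mem_univ _),
      funext fun j => @h (Sum.inr j) (Finset.mem_univ _)⟩
  · rintro ⟨hs, ha⟩ u _
    cases u with
    | inl i => exact congrFun hs i
    | inr j => exact congrFun ha j

/-- Update a current configuration at a single coordinate. -/
def updC (c : (∀ i, Sv i) × (∀ j, Av j)) :
    ∀ u : CurVar ns na, cv Sv Av u → (∀ i, Sv i) × (∀ j, Av j)
  | .inl i, τ => (Function.update c.1 i τ, c.2)
  | .inr j, τ => (c.1, Function.update c.2 j τ)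

lemma curCoord_updC_ne {c : (∀ i, Sv i) × (∀ j, Av j)} {u u' : CurVar ns na}
    (h : u' ≠ u) (τ : cv Sv Av u) : curCoord (updC c u τ) u' = curCoord c u' := by
  cases u with
  | inl i =>
    cases u' with
    | inl i' =>
      have : i' ≠ i := fun hh => h (by rw [hh])
      exact Function.update_of_ne this _ _
    | inr j' => rfl
  | inr j =>
    cases u' with
    | inl i' => rfl
    | inr j' =>
      have : j' ≠ j := fun hh => h (by rw [hh])
      exact Function.update_of_ne this _ _

lemma curCoord_updC_same (c : (∀ i, Sv i) × (∀ j, Av j)) (u : CurVar ns na)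
    (τ : cv Sv Av u) : curCoord (updC c u τ) u = τ := by
  cases u with
  | inl i => exact Function.update_self _ _ _
  | inr j => exact Function.update_self _ _ _

lemma cur_ext {c d : (∀ i, Sv i) × (∀ j, Av j)}
    (h : ∀ u : CurVar ns na, curCoord c u = curCoord d u) : c = d := by
  obtain ⟨s, a⟩ := c
  obtain ⟨s', a'⟩ := d
  have h1 : s = s' := funext fun i => h (.inl i)
  have h2 : a = a' := funext fun j => h (.inr j)
  rw [h1, h2]

lemma updC_eq_of_agree {c d : (∀ i, Sv i) × (∀ j, Av j)} {u : CurVar ns na}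
    (h : ∀ u' : CurVar ns na, u' ≠ u → curCoord c u' = curCoord d u') (τ : cv Sv Av u) :
    updC c u τ = updC d u τ := by
  refine cur_ext fun u' => ?_
  by_cases hu : u' = u
  · subst hu; rw [curCoord_updC_same, curCoord_updC_same]
  · rw [curCoord_updC_ne hu, curCoord_updC_ne hu, h u' hu]

lemma agree_off_iff (u : CurVar ns na) (s : ∀ i, Sv i) (a : ∀ j, Av j) (t : ∀ m, Sv m)
    (x : ∀ v, fv Sv Av v) :
    (∀ v ∈ curSet ns na \ {liftCur u}, pack s a t v = x v)
      ↔ ∀ u' : CurVar ns na, u' ≠ u → curCoord (s, a) u' = curCoord (xc x) u' := by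
  rw [curSet_eq, ← Finset.image_singleton (f := liftCur) (a := u),
    ← Finset.image_sdiff _ _ liftCur_injective, Finset.forall_mem_image]
  constructor
  · intro h u' hu'
    have := @h u' (Finset.mem_sdiff.2 ⟨Finset.mem_univ _, by simpa using hu'⟩)
    cases u' <;> exact this
  · intro h u' hu'
    have hne : u' ≠ u := by simpa using (Finset.mem_sdiff.1 hu').2
    have := h u' hne
    cases u' <;> exact this

lemma sum_cur_fix_off (c : (∀ i, Sv i) × (∀ j, Av j)) (u : CurVar ns na)
    (f : (∀ i, Sv i) × (∀ j, Av j) → ℝ) :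
    ∑ s, ∑ a, (if ∀ u' : CurVar ns na, u' ≠ u → curCoord (s, a) u' = curCoord c u'
        then f (s, a) else 0)
      = ∑ τ : cv Sv Av u, f (updC c u τ) := by
  cases u with
  | inl i₀ =>
    have hc : ∀ (s : ∀ i, Sv i) (a : ∀ j, Av j),
        (∀ u' : CurVar ns na, u' ≠ .inl i₀ → curCoord (s, a) u' = curCoord c u')
          ↔ (∀ i, i ≠ i₀ → s i = c.1 i) ∧ a = c.2 := by
      intro s a
      constructor
      · intro h
        exact ⟨fun i hi => h (.inl i) (fun hh => hi (Sum.inl.inj hh)),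
          funext fun j => h (.inr j) (fun hh => Sum.inr_ne_inl hh)⟩
      · rintro ⟨h1, rfl⟩ u' hu'
        cases u' with
        | inl i => exact h1 i (fun hh => hu' (by rw [hh]))
        | inr j => rfl
    simp only [hc, ite_and, sum_if_const, Finset.sum_ite_eq', Finset.mem_univ, if_true]
    convert sum_fix_off c.1 i₀ (fun s => f (s, c.2)) using 2
    exact ite_inst _ _ _ _
    all_goals rfl
  | inr j₀ =>
    have hc : ∀ (s : ∀ i, Sv i) (a : ∀ j, Av j),
        (∀ u' : CurVar ns na, u' ≠ .inr j₀ → curCoord (s, a) u' = curCoord c u')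
          ↔ s = c.1 ∧ (∀ j, j ≠ j₀ → a j = c.2 j) := by
      intro s a
      constructor
      · intro h
        exact ⟨funext fun i => h (.inl i) (fun hh => Sum.inl_ne_inr hh),
          fun j hj => h (.inr j) (fun hh => hj (Sum.inr.inj hh))⟩
      · rintro ⟨rfl, h2⟩ u' hu'
        cases u' with
        | inl i => rfl
        | inr j => exact h2 j (fun hh => hu' (by rw [hh]))
    simp only [hc, ite_and, sum_if_const, Finset.sum_ite_eq', Finset.mem_univ, if_true]
    convert sum_fix_off c.2 j₀ (fun a => f (c.1, a)) using 2
    exact ite_inst _ _ _ _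
    all_goals rfl

end FMDPAux

section ProbAux
variable {ns na : ℕ} {Sv : Fin ns → Type} {Av : Fin na → Type}
  [∀ i, Fintype (Sv i)] [∀ i, DecidableEq (Sv i)]
  [∀ j, Fintype (Av j)] [∀ j, DecidableEq (Av j)]

/-- Marginal of `p` on the current-step coordinates, as a function of a current config. -/
def Qm (p : (∀ v, fv Sv Av v) → ℝ) (c : (∀ i, Sv i) × (∀ j, Av j)) : ℝ :=
  ∑ t, p (pack c.1 c.2 t)

lemma Qm_pos [∀ i, Nonempty (Sv i)] {p : (∀ v, fv Sv Av v) → ℝ}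
    (hpos : ∀ x, 0 < p x) (c : (∀ i, Sv i) × (∀ j, Av j)) : 0 < Qm p c :=
  Finset.sum_pos (fun t _ => hpos _) Finset.univ_nonempty

lemma marg_cur (p : (∀ v, fv Sv Av v) → ℝ) (x : ∀ v, fv Sv Av v) :
    marg p (curSet ns na) x = Qm p (xc x) := by
  unfold marg
  rw [sum_pack (fun y => if ∀ v ∈ curSet ns na, y v = x v then p y else 0)]
  simp only [agree_cur_iff, ite_and, sum_if_const, Finset.sum_ite_eq', Finset.mem_univ,
    if_true]
  rfl

variable {T : (∀ i, Sv i) → (∀ j, Av j) → (∀ k, Sv k) → ℝ}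
  {Tj : ∀ k : Fin ns, (∀ i, Sv i) × (∀ j, Av j) → Sv k → ℝ}
  {p : (∀ v, fv Sv Av v) → ℝ}

lemma p_eq (hcons : FConsistent p T)
    (hind : ∀ s a s', T s a s' = ∏ k, Tj k (s, a) (s' k))
    (s : ∀ i, Sv i) (a : ∀ j, Av j) (t : ∀ m, Sv m) :
    p (pack s a t) = Qm p (s, a) * ∏ m, Tj m (s, a) (t m) := by
  have h := hcons (pack s a t)
  rw [h]
  refine congrArg₂ (· * ·) (marg_cur p (pack s a t)) ?_
  exact hind _ _ _

lemma sum_slice (hcons : FConsistent p T)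
    (hind : ∀ s a s', T s a s' = ∏ k, Tj k (s, a) (s' k))
    (hTj1 : ∀ k c, ∑ y, Tj k c y = 1)
    (k : Fin ns) (y : Sv k) (s : ∀ i, Sv i) (a : ∀ j, Av j) :
    ∑ t : ∀ m, Sv m, (if t k = y then p (pack s a t) else 0)
      = Qm p (s, a) * Tj k (s, a) y := by
  have hb : ∀ t : ∀ m, Sv m, (if t k = y then p (pack s a t) else 0)
      = Qm p (s, a) * (if t k = y then ∏ m, Tj m (s, a) (t m) else 0) := by
    intro t
    by_cases h : t k = y
    · rw [if_pos h, if_pos h, p_eq hcons hind]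
    · rw [if_neg h, if_neg h, mul_zero]
  rw [Finset.sum_congr rfl fun t _ => hb t, ← Finset.mul_sum,
    sum_pi_ite_prod (fun m => Tj m (s, a)) (fun m => hTj1 m (s, a)) k y]

lemma marg_insert (hcons : FConsistent p T)
    (hind : ∀ s a s', T s a s' = ∏ k, Tj k (s, a) (s' k))
    (hTj1 : ∀ k c, ∑ y, Tj k c y = 1)
    (k : Fin ns) (x : ∀ v, fv Sv Av v) :
    marg p (insert (.inr (.inr k)) (curSet ns na)) x
      = Qm p (xc x) * Tj k (xc x) (x (.inr (.inr k))) := by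
  generalize hR : Qm p (xc x) * Tj k (xc x) (x (.inr (.inr k))) = R
  unfold marg
  rw [sum_pack (fun y => if ∀ v ∈ insert (Sum.inr (Sum.inr k) : FVar ns na) (curSet ns na),
    y v = x v then p y else 0)]
  have hcond : ∀ (s : ∀ i, Sv i) (a : ∀ j, Av j) (t : ∀ m, Sv m),
      (∀ v ∈ insert (Sum.inr (Sum.inr k) : FVar ns na) (curSet ns na), pack s a t v = x v)
        ↔ (s = (xc x).1 ∧ a = (xc x).2) ∧ t k = x (.inr (.inr k)) := by
    intro s a t
    rw [Finset.forall_mem_insert, agree_cur_iff]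
    exact and_comm
  letI : ∀ z : Sv k, Decidable (z = x (.inr (.inr k))) :=
    fun z => (inferInstance : DecidableEq (Sv k)) z _
  simp only [hcond, ite_and, sum_if_const, Finset.sum_ite_eq', Finset.mem_univ, if_true]
  exact (sum_slice hcons hind hTj1 k _ _ _).trans hR

lemma marg_off (u : CurVar ns na) (x : ∀ v, fv Sv Av v) :
    marg p (curSet ns na \ {liftCur u}) x = ∑ τ : cv Sv Av u, Qm p (updC (xc x) u τ) := by
  unfold marg
  rw [sum_pack (fun y => if ∀ v ∈ curSet ns na \ {liftCur u}, y v = x v then p y else 0)]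
  simp only [agree_off_iff, sum_if_const]
  exact sum_cur_fix_off (xc x) u (fun d => Qm p d)

lemma marg_off_insert (hcons : FConsistent p T)
    (hind : ∀ s a s', T s a s' = ∏ k, Tj k (s, a) (s' k))
    (hTj1 : ∀ k c, ∑ y, Tj k c y = 1)
    (u : CurVar ns na) (k : Fin ns) (x : ∀ v, fv Sv Av v) :
    marg p (insert (.inr (.inr k)) (curSet ns na \ {liftCur u})) x
      = ∑ τ : cv Sv Av u,
          Qm p (updC (xc x) u τ) * Tj k (updC (xc x) u τ) (x (.inr (.inr k))) := by
  generalize hR : ∑ τ : cv Sv Av u,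
      Qm p (updC (xc x) u τ) * Tj k (updC (xc x) u τ) (x (.inr (.inr k))) = R
  unfold marg
  rw [sum_pack (fun y => if ∀ v ∈ insert (Sum.inr (Sum.inr k) : FVar ns na)
    (curSet ns na \ {liftCur u}), y v = x v then p y else 0)]
  have hcond : ∀ (s : ∀ i, Sv i) (a : ∀ j, Av j) (t : ∀ m, Sv m),
      (∀ v ∈ insert (Sum.inr (Sum.inr k) : FVar ns na) (curSet ns na \ {liftCur u}),
          pack s a t v = x v)
        ↔ (∀ u' : CurVar ns na, u' ≠ u → curCoord (s, a) u' = curCoord (xc x) u')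
            ∧ t k = x (.inr (.inr k)) := by
    intro s a t
    rw [Finset.forall_mem_insert, agree_off_iff]
    exact and_comm
  letI : ∀ z : Sv k, Decidable (z = x (.inr (.inr k))) :=
    fun z => (inferInstance : DecidableEq (Sv k)) z _
  simp only [hcond, ite_and, sum_if_const]
  have hslice : ∀ (s : ∀ i, Sv i) (a : ∀ j, Av j),
      (∑ t : ∀ m, Sv m, if t k = x (.inr (.inr k)) then p (pack s a t) else 0)
        = Qm p (s, a) * Tj k (s, a) (x (.inr (.inr k))) :=
    fun s a => sum_slice hcons hind hTj1 k _ s a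
  simp only [hslice]
  exact (sum_cur_fix_off (xc x) u (fun d => Qm p d * Tj k d (x (.inr (.inr k))))).trans hR

end ProbAux


/-- For independent transitions and a full-support consistent pmf `p`,
the conditional independence Xᵢ ⊥ S'ⱼ | ((S,A) \ {Xᵢ}) holds iff the coordinate kernel Tⱼ
takes equal values at any two current configurations differing only in coordinate i. -/
theorem fmdp_ci_iff_kernel_does_not_depend
    {ns na : ℕ} (Sv : Fin ns → Type) (Av : Fin na → Type)
    [∀ i, Fintype (Sv i)] [∀ i, DecidableEq (Sv i)] [∀ i, Nonempty (Sv i)]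
    [∀ j, Fintype (Av j)] [∀ j, DecidableEq (Av j)] [∀ j, Nonempty (Av j)]
    (T : (∀ i, Sv i) → (∀ j, Av j) → (∀ k, Sv k) → ℝ)
    (hT0 : ∀ s a s', 0 ≤ T s a s') (hT1 : ∀ s a, ∑ s', T s a s' = 1)
    (Tj : ∀ k : Fin ns, (∀ i, Sv i) × (∀ j, Av j) → Sv k → ℝ)
    (hTj0 : ∀ k c y, 0 ≤ Tj k c y) (hTj1 : ∀ k c, ∑ y, Tj k c y = 1)
    (hind : ∀ s a s', T s a s' = ∏ k, Tj k (s, a) (s' k))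
    (p : (∀ v, fv Sv Av v) → ℝ)
    (hpos : ∀ x, 0 < p x) (hsum : ∑ x, p x = 1) (hcons : FConsistent p T) :
    ∀ (u : CurVar ns na) (k : Fin ns),
      CondIndep p {liftCur u} {(.inr (.inr k) : FVar ns na)}
        (curSet ns na \ {liftCur u}) ↔
      (∀ (c c' : (∀ i, Sv i) × (∀ j, Av j)),
        (∀ u' : CurVar ns na, u' ≠ u → curCoord c u' = curCoord c' u') →
        ∀ y, Tj k c y = Tj k c' y) := by
  intro u k
  have hmem : liftCur u ∈ curSet ns na := by
    rw [curSet_eq]; exact Finset.mem_image_of_mem _ (Finset.mem_univ u)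
  have hXZ : {liftCur u} ∪ (curSet ns na \ {liftCur u}) = curSet ns na :=
    Finset.union_sdiff_of_subset (Finset.singleton_subset_iff.2 hmem)
  have hXYZ : {liftCur u} ∪ {(Sum.inr (Sum.inr k) : FVar ns na)}
        ∪ (curSet ns na \ {liftCur u})
      = insert (Sum.inr (Sum.inr k)) (curSet ns na) := by
    rw [Finset.union_comm {liftCur u}, Finset.union_assoc, hXZ, ← Finset.insert_eq]
  have hYZ : {(Sum.inr (Sum.inr k) : FVar ns na)} ∪ (curSet ns na \ {liftCur u})
      = insert (Sum.inr (Sum.inr k)) (curSet ns na \ {liftCur u}) :=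
    (Finset.insert_eq _ _).symm
  haveI hNE : Nonempty (cv Sv Av u) := by
    cases u with
    | inl i => exact ⟨Classical.arbitrary (Sv i)⟩
    | inr j => exact ⟨Classical.arbitrary (Av j)⟩
  have hQ : ∀ c, 0 < Qm p c := fun c => Qm_pos hpos c
  have hSpos : ∀ c : (∀ i, Sv i) × (∀ j, Av j),
      0 < ∑ τ : cv Sv Av u, Qm p (updC c u τ) :=
    fun c => Finset.sum_pos (fun τ _ => hQ _) Finset.univ_nonempty
  constructor
  · intro hCI c c' hcc' y
    have key : ∀ d : (∀ i, Sv i) × (∀ j, Av j),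
        (∀ u' : CurVar ns na, u' ≠ u → curCoord d u' = curCoord c u') →
        Tj k d y * (∑ τ : cv Sv Av u, Qm p (updC c u τ))
          = ∑ τ : cv Sv Av u, Qm p (updC c u τ) * Tj k (updC c u τ) y := by
      intro d hd
      have hx := hCI (pack d.1 d.2 (Function.update (fun m => Classical.arbitrary (Sv m)) k y))
      rw [hXYZ, hXZ, hYZ, marg_insert hcons hind hTj1, marg_cur, marg_off,
        marg_off_insert hcons hind hTj1] at hx
      have hxcd : xc (pack d.1 d.2
          (Function.update (fun m => Classical.arbitrary (Sv m)) k y)) = d := rfl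
      simp only [hxcd, pack_inr_inr, Function.update_self] at hx
      simp only [updC_eq_of_agree hd] at hx
      rw [mul_assoc] at hx
      exact mul_left_cancel₀ (ne_of_gt (hQ d)) hx
    have h1 := key c (fun _ _ => rfl)
    have h2 := key c' (fun u' hu' => (hcc' u' hu').symm)
    exact mul_right_cancel₀ (ne_of_gt (hSpos c)) (h1.trans h2.symm)
  · intro hker x
    rw [hXYZ, hXZ, hYZ, marg_insert hcons hind hTj1, marg_cur, marg_off,
      marg_off_insert hcons hind hTj1]
    have he : ∀ τ : cv Sv Av u,
        Tj k (updC (xc x) u τ) (x (.inr (.inr k))) = Tj k (xc x) (x (.inr (.inr k))) :=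
      fun τ => hker _ _ (fun u' hu' => curCoord_updC_ne hu' τ) _
    simp only [he]
    rw [← Finset.sum_mul]
    ring
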